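/- Let Z be a real random variable that is moment bounded with parameter L > 0, let k ≥ 1 be an integer, let S ⊆ {1,...,k} be nonempty, and let d_t be strictly positive integers for t ∈ S. Set D = Σ_{t∈S} t·d_t and d = Σ_{t∈S} d_t. Then | E[ Π_{t∈S} (Z^t)^{d_t} ] | ≤ min_{t∈S} { L^{D−t} · D! · E[|Z|^t] / t! }, and | E[ Π_{t∈S} (Z^t − E[Z^t])^{d_t} ] | ≤ min_{t∈S} { 2^d · L^{D−t} · D! · E[|Z|^t] / t! }. -/

import Mathlib

open MeasureTheory ProbabilityTheory Finset

lemma fact_pow_mul_dvd (s e w : ℕ) : s.factorial ^ e * w.factorial ∣ (s * e + w).factorial := by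
  induction e with
  | zero => simpa using dvd_refl w.factorial
  | succ n ih =>
    have h1 : s.factorial ^ (n + 1) * w.factorial
        = s.factorial * (s.factorial ^ n * w.factorial) := by ring
    have h2 : s * (n + 1) + w = s + (s * n + w) := by ring
    rw [h1, h2]
    exact dvd_trans (mul_dvd_mul_left _ ih)
      (Nat.factorial_mul_factorial_dvd_factorial_add _ _)

lemma prod_fact_dvd (U : Finset ℕ) (e : ℕ → ℕ) (w : ℕ) :
    (∏ s ∈ U, (s.factorial) ^ (e s)) * w.factorial ∣ ((∑ s ∈ U, s * e s) + w).factorial := by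
  induction U using Finset.induction with
  | empty => simp
  | @insert a U ha ih =>
    rw [prod_insert ha, sum_insert ha]
    have h1 : a.factorial ^ e a * (∏ s ∈ U, s.factorial ^ e s) * w.factorial
        = a.factorial ^ e a * ((∏ s ∈ U, s.factorial ^ e s) * w.factorial) := by ring
    have h2 : a * e a + ∑ s ∈ U, s * e s + w = a * e a + (∑ s ∈ U, s * e s + w) := by ring
    rw [h1, h2]
    exact dvd_trans (mul_dvd_mul_left _ ih) (fact_pow_mul_dvd a (e a) _)

lemma mom_iter (L : ℝ) (hL : 0 < L) (m : ℕ → ℝ) (hmnn : ∀ n, 0 ≤ m n)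
    (hstep : ∀ i : ℕ, 1 ≤ i → m i ≤ i * L * m (i - 1)) :
    ∀ t n : ℕ, t ≤ n → (t.factorial : ℝ) * m n ≤ L ^ (n - t) * (n.factorial : ℝ) * m t := by
  intro t n h
  induction n, h using Nat.le_induction with
  | base => simp
  | succ n hn ih =>
    have h1 := hstep (n + 1) (by omega)
    simp only [Nat.add_sub_cancel] at h1
    have h2 : (t.factorial : ℝ) * m (n + 1) ≤ ((n:ℝ) + 1) * L * ((t.factorial : ℝ) * m n) := by
      have := mul_le_mul_of_nonneg_left h1 (by positivity : (0:ℝ) ≤ (t.factorial : ℝ))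
      push_cast at this ⊢
      nlinarith
    have h3 : ((n:ℝ) + 1) * L * ((t.factorial : ℝ) * m n)
        ≤ ((n:ℝ) + 1) * L * (L ^ (n - t) * (n.factorial : ℝ) * m t) := by
      apply mul_le_mul_of_nonneg_left ih
      positivity
    have h4 : n + 1 - t = (n - t) + 1 := by omega
    calc (t.factorial : ℝ) * m (n + 1) ≤ _ := le_trans h2 h3
      _ = L ^ (n + 1 - t) * ((n+1).factorial : ℝ) * m t := by
          rw [h4, Nat.factorial_succ]; push_cast; ring

lemma mom_one_le (L : ℝ) (hL : 0 < L) (m : ℕ → ℝ) (hm0 : m 0 = 1) (hmnn : ∀ n, 0 ≤ m n)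
    (hstep : ∀ i : ℕ, 1 ≤ i → m i ≤ i * L * m (i - 1)) (n : ℕ) :
    m n ≤ L ^ n * (n.factorial : ℝ) := by
  have := mom_iter L hL m hmnn hstep 0 n (Nat.zero_le n)
  simpa [hm0] using this

lemma prod_mom_le (L : ℝ) (hL : 0 < L) (m : ℕ → ℝ) (hm0 : m 0 = 1) (hmnn : ∀ n, 0 ≤ m n)
    (hstep : ∀ i : ℕ, 1 ≤ i → m i ≤ i * L * m (i - 1)) (V : Finset ℕ) (f : ℕ → ℕ) :
    ∏ s ∈ V, m s ^ f s ≤ L ^ (∑ s ∈ V, s * f s) * ∏ s ∈ V, (s.factorial : ℝ) ^ f s := by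
  calc ∏ s ∈ V, m s ^ f s ≤ ∏ s ∈ V, (L ^ s * (s.factorial : ℝ)) ^ f s := by
        apply prod_le_prod (fun s _ => pow_nonneg (hmnn s) _)
        exact fun s _ => pow_le_pow_left₀ (hmnn s) (mom_one_le L hL m hm0 hmnn hstep s) _
    _ = L ^ (∑ s ∈ V, s * f s) * ∏ s ∈ V, (s.factorial : ℝ) ^ f s := by
        simp_rw [mul_pow, ← pow_mul]
        rw [prod_mul_distrib, prod_pow_eq_pow_sum]

lemma key_term_bound (L : ℝ) (hL : 0 < L) (m : ℕ → ℝ) (hm0 : m 0 = 1) (hmnn : ∀ n, 0 ≤ m n)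
    (hstep : ∀ i : ℕ, 1 ≤ i → m i ≤ i * L * m (i - 1))
    (A : ℕ) (U : Finset ℕ) (e : ℕ → ℕ) (t0 : ℕ)
    (h : t0 ≤ A ∨ (t0 ∈ U ∧ 1 ≤ e t0)) :
    (t0.factorial : ℝ) * (m A * ∏ s ∈ U, m s ^ e s) ≤
      L ^ (A + (∑ s ∈ U, s * e s) - t0) * ((A + ∑ s ∈ U, s * e s).factorial : ℝ) * m t0 := by
  rcases h with ht0A | ⟨htU, he⟩
  · -- case t0 ≤ A
    have hA := mom_iter L hL m hmnn hstep t0 A ht0A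
    have hP := prod_mom_le L hL m hm0 hmnn hstep U e
    have hfact : (A.factorial : ℝ) * ∏ s ∈ U, (s.factorial : ℝ) ^ e s
        ≤ (((A + ∑ s ∈ U, s * e s).factorial : ℕ) : ℝ) := by
      have hdvd := prod_fact_dvd U e A
      have hle := Nat.le_of_dvd (Nat.factorial_pos _) hdvd
      rw [Nat.add_comm] at hle
      calc (A.factorial : ℝ) * ∏ s ∈ U, (s.factorial : ℝ) ^ e s
          = (((∏ s ∈ U, s.factorial ^ e s) * A.factorial : ℕ) : ℝ) := by push_cast; ring
        _ ≤ _ := by exact_mod_cast hle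
    calc (t0.factorial : ℝ) * (m A * ∏ s ∈ U, m s ^ e s)
        = ((t0.factorial : ℝ) * m A) * ∏ s ∈ U, m s ^ e s := by ring
      _ ≤ (L ^ (A - t0) * (A.factorial : ℝ) * m t0) *
            (L ^ (∑ s ∈ U, s * e s) * ∏ s ∈ U, (s.factorial : ℝ) ^ e s) := by
          apply mul_le_mul hA hP (prod_nonneg fun s _ => pow_nonneg (hmnn s) _)
          have := hmnn t0
          positivity
      _ = L ^ ((A - t0) + ∑ s ∈ U, s * e s) *
            ((A.factorial : ℝ) * ∏ s ∈ U, (s.factorial : ℝ) ^ e s) * m t0 := by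
          rw [pow_add]; ring
      _ ≤ L ^ ((A - t0) + ∑ s ∈ U, s * e s) *
            ((A + ∑ s ∈ U, s * e s).factorial : ℝ) * m t0 := by
          apply mul_le_mul_of_nonneg_right _ (hmnn t0)
          exact mul_le_mul_of_nonneg_left hfact (pow_nonneg hL.le _)
      _ = _ := by rw [show (A - t0) + ∑ s ∈ U, s * e s = A + (∑ s ∈ U, s * e s) - t0 by omega]
  · -- case t0 ∈ U, 1 ≤ e t0
    set e' : ℕ → ℕ := Function.update e t0 (e t0 - 1) with he'
    have herase : ∀ s ∈ U.erase t0, m s ^ e' s = m s ^ e s := fun s hs => by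
      rw [he', Function.update_of_ne (Finset.ne_of_mem_erase hs)]
    have hsplit : ∏ s ∈ U, m s ^ e s = m t0 * ∏ s ∈ U, m s ^ e' s := by
      rw [← Finset.mul_prod_erase U _ htU, ← Finset.mul_prod_erase U (fun s => m s ^ e' s) htU,
        Finset.prod_congr rfl herase, he', Function.update_self, ← mul_assoc, ← pow_succ',
        Nat.sub_add_cancel he]
    have hsum : ∑ s ∈ U, s * e s = t0 + ∑ s ∈ U, s * e' s := by
      have h1 : ∑ s ∈ U.erase t0, s * e' s = ∑ s ∈ U.erase t0, s * e s :=
        Finset.sum_congr rfl (fun s hs => by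
          rw [he', Function.update_of_ne (Finset.ne_of_mem_erase hs)])
      rw [← Finset.add_sum_erase U (fun s => s * e s) htU,
        ← Finset.add_sum_erase U (fun s => s * e' s) htU, h1, he', Function.update_self]
      obtain ⟨c, hc⟩ := Nat.exists_eq_add_of_le he
      rw [hc]
      simp only [Nat.add_sub_cancel_left]
      ring
    have hfact : (t0.factorial : ℝ) *
        ((A.factorial : ℝ) * ∏ s ∈ U, (s.factorial : ℝ) ^ e' s)
        ≤ ((A + ∑ s ∈ U, s * e s).factorial : ℝ) := by
      have hd1 : t0.factorial * A.factorial ∣ (t0 + A).factorial :=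
        Nat.factorial_mul_factorial_dvd_factorial_add _ _
      have hd2 := prod_fact_dvd U e' (t0 + A)
      have hd3 : (∏ s ∈ U, s.factorial ^ e' s) * (t0.factorial * A.factorial) ∣
          ((∑ s ∈ U, s * e' s) + (t0 + A)).factorial :=
        dvd_trans (mul_dvd_mul_left _ hd1) hd2
      have hle := Nat.le_of_dvd (Nat.factorial_pos _) hd3
      have hidx : (∑ s ∈ U, s * e' s) + (t0 + A) = A + ∑ s ∈ U, s * e s := by omega
      rw [hidx] at hle
      calc (t0.factorial : ℝ) * ((A.factorial : ℝ) * ∏ s ∈ U, (s.factorial : ℝ) ^ e' s)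
          = (((∏ s ∈ U, s.factorial ^ e' s) * (t0.factorial * A.factorial) : ℕ) : ℝ) := by
            push_cast; ring
        _ ≤ _ := by exact_mod_cast hle
    have hb1 : m A * ∏ s ∈ U, m s ^ e' s
        ≤ L ^ (A + ∑ s ∈ U, s * e' s) *
          ((A.factorial : ℝ) * ∏ s ∈ U, (s.factorial : ℝ) ^ e' s) := by
      calc m A * ∏ s ∈ U, m s ^ e' s
          ≤ (L ^ A * (A.factorial : ℝ)) *
            (L ^ (∑ s ∈ U, s * e' s) * ∏ s ∈ U, (s.factorial : ℝ) ^ e' s) := by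
            apply mul_le_mul (mom_one_le L hL m hm0 hmnn hstep A)
              (prod_mom_le L hL m hm0 hmnn hstep U e')
              (prod_nonneg fun s _ => pow_nonneg (hmnn s) _) (by positivity)
        _ = _ := by rw [pow_add]; ring
    calc (t0.factorial : ℝ) * (m A * ∏ s ∈ U, m s ^ e s)
        = ((t0.factorial : ℝ) * (m A * ∏ s ∈ U, m s ^ e' s)) * m t0 := by
          rw [hsplit]; ring
      _ ≤ ((t0.factorial : ℝ) * (L ^ (A + ∑ s ∈ U, s * e' s) *
            ((A.factorial : ℝ) * ∏ s ∈ U, (s.factorial : ℝ) ^ e' s))) * m t0 := by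
          apply mul_le_mul_of_nonneg_right _ (hmnn t0)
          exact mul_le_mul_of_nonneg_left hb1 (by positivity)
      _ = L ^ (A + ∑ s ∈ U, s * e' s) *
            ((t0.factorial : ℝ) * ((A.factorial : ℝ) * ∏ s ∈ U, (s.factorial : ℝ) ^ e' s)) *
            m t0 := by ring
      _ ≤ L ^ (A + ∑ s ∈ U, s * e' s) *
            ((A + ∑ s ∈ U, s * e s).factorial : ℝ) * m t0 := by
          apply mul_le_mul_of_nonneg_right _ (hmnn t0)
          exact mul_le_mul_of_nonneg_left hfact (by positivity)
      _ = _ := by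
          rw [show A + ∑ s ∈ U, s * e' s = A + (∑ s ∈ U, s * e s) - t0 by omega]


/-- A real random variable `Z` is *moment bounded* with parameter `L > 0` if all its absolute
moments exist and for every integer `i ≥ 1`, `E[|Z|^i] ≤ i·L·E[|Z|^{i-1}]`. -/
def MomentBounded {Ω : Type*} [MeasurableSpace Ω] (P : Measure Ω) (Z : Ω → ℝ) (L : ℝ) : Prop :=
  (∀ i : ℕ, Integrable (fun ω => |Z ω| ^ i) P) ∧
  ∀ i : ℕ, 1 ≤ i → (∫ ω, |Z ω| ^ i ∂P) ≤ i * L * ∫ ω, |Z ω| ^ (i - 1) ∂P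

theorem moment_bound_products
    (Ω : Type) [MeasurableSpace Ω] (P : Measure Ω) [IsProbabilityMeasure P]
    (Z : Ω → ℝ) (L : ℝ) (hL : 0 < L) (hZ : Measurable Z) (hmb : MomentBounded P Z L)
    (k : ℕ) (hk : 1 ≤ k) (S : Finset ℕ) (hS : S.Nonempty) (hSk : S ⊆ Finset.Icc 1 k)
    (d : ℕ → ℕ) (hd : ∀ t ∈ S, 1 ≤ d t) :
    |∫ ω, ∏ t ∈ S, (Z ω ^ t) ^ d t ∂P| ≤
      S.inf' hS (fun t =>
        L ^ ((∑ s ∈ S, s * d s) - t) * (Nat.factorial (∑ s ∈ S, s * d s) : ℝ) *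
          (∫ ω, |Z ω| ^ t ∂P) / (Nat.factorial t : ℝ)) ∧
    |∫ ω, ∏ t ∈ S, (Z ω ^ t - ∫ ω', Z ω' ^ t ∂P) ^ d t ∂P| ≤
      S.inf' hS (fun t =>
        2 ^ (∑ s ∈ S, d s) * L ^ ((∑ s ∈ S, s * d s) - t) *
          (Nat.factorial (∑ s ∈ S, s * d s) : ℝ) *
          (∫ ω, |Z ω| ^ t ∂P) / (Nat.factorial t : ℝ)) := by
  classical
  set D := ∑ s ∈ S, s * d s with hD
  set m : ℕ → ℝ := fun n => ∫ ω, |Z ω| ^ n ∂P with hm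
  have hmnn : ∀ n, 0 ≤ m n := fun n => integral_nonneg (fun ω => by positivity)
  have hm0 : m 0 = 1 := by simp [hm]
  have hstep : ∀ i : ℕ, 1 ≤ i → m i ≤ i * L * m (i - 1) := hmb.2
  have habs : ∀ t : ℕ, |∫ ω, Z ω ^ t ∂P| ≤ m t := fun t => by
    have := norm_integral_le_integral_norm (μ := P) (fun ω => Z ω ^ t)
    simpa [hm, Real.norm_eq_abs, abs_pow] using this
  have htD : ∀ t ∈ S, t ≤ D := fun t ht => by
    have h1 : t ≤ t * d t := Nat.le_mul_of_pos_right t (hd t ht)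
    exact le_trans h1 (Finset.single_le_sum (f := fun s => s * d s)
      (fun s _ => Nat.zero_le _) ht)
  constructor
  · -- first bound
    have hint1 : (∫ ω, ∏ t ∈ S, (Z ω ^ t) ^ d t ∂P) = ∫ ω, Z ω ^ D ∂P := by
      congr 1; funext ω
      simp_rw [← pow_mul]
      rw [prod_pow_eq_pow_sum]
    rw [hint1]
    apply Finset.le_inf'
    intro t ht
    rw [le_div_iff₀ (by positivity : (0:ℝ) < (Nat.factorial t : ℝ))]
    have h1 : |∫ ω, Z ω ^ D ∂P| ≤ m D := by
      have := norm_integral_le_integral_norm (μ := P) (fun ω => Z ω ^ D)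
      simpa [hm, Real.norm_eq_abs, abs_pow] using this
    have h2 := mom_iter L hL m hmnn hstep t D (htD t ht)
    calc |∫ ω, Z ω ^ D ∂P| * (Nat.factorial t : ℝ)
        ≤ m D * (Nat.factorial t : ℝ) := mul_le_mul_of_nonneg_right h1 (by positivity)
      _ = (Nat.factorial t : ℝ) * m D := mul_comm _ _
      _ ≤ L ^ (D - t) * (Nat.factorial D : ℝ) * m t := h2
  · -- second bound
    set g : Ω → ℝ := fun ω =>
      ∏ t ∈ S, (2:ℝ) ^ (d t - 1) * (|Z ω| ^ (t * d t) + (m t) ^ (d t)) with hg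
    have hpt : ∀ ω, ∏ t ∈ S, |Z ω ^ t - ∫ ω', Z ω' ^ t ∂P| ^ d t ≤ g ω := by
      intro ω
      refine Finset.prod_le_prod (fun t _ => pow_nonneg (abs_nonneg _) _) fun t ht => ?_
      have hsub : |Z ω ^ t - ∫ ω', Z ω' ^ t ∂P| ≤ |Z ω| ^ t + m t := by
        calc |Z ω ^ t - ∫ ω', Z ω' ^ t ∂P| ≤ |Z ω ^ t| + |∫ ω', Z ω' ^ t ∂P| :=
              abs_sub _ _
          _ ≤ |Z ω| ^ t + m t := by
              rw [abs_pow]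
              exact add_le_add (le_refl _) (habs t)
      calc |Z ω ^ t - ∫ ω', Z ω' ^ t ∂P| ^ d t ≤ (|Z ω| ^ t + m t) ^ d t :=
            pow_le_pow_left₀ (abs_nonneg _) hsub _
        _ ≤ 2 ^ (d t - 1) * ((|Z ω| ^ t) ^ d t + (m t) ^ d t) :=
            add_pow_le (by positivity) (hmnn t) _
        _ = 2 ^ (d t - 1) * (|Z ω| ^ (t * d t) + (m t) ^ d t) := by rw [← pow_mul]
    have hgexp : ∀ ω, g ω = 2 ^ (∑ t ∈ S, (d t - 1)) *
        ∑ T ∈ S.powerset, |Z ω| ^ (∑ t ∈ T, t * d t) *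
          ∏ s ∈ S \ T, (m s) ^ (d s) := by
      intro ω
      show ∏ t ∈ S, (2:ℝ) ^ (d t - 1) * (|Z ω| ^ (t * d t) + (m t) ^ (d t)) = _
      rw [Finset.prod_mul_distrib, prod_pow_eq_pow_sum, Finset.prod_add]
      congr 1
      refine Finset.sum_congr rfl fun T hT => ?_
      rw [prod_pow_eq_pow_sum]
    have hgint : Integrable g P := by
      have : g = fun ω => 2 ^ (∑ t ∈ S, (d t - 1)) *
          ∑ T ∈ S.powerset, |Z ω| ^ (∑ t ∈ T, t * d t) *
            ∏ s ∈ S \ T, (m s) ^ (d s) := funext hgexp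
      rw [this]
      exact (integrable_finset_sum _ (fun T _ => (hmb.1 _).mul_const _)).const_mul _
    have hgval : ∫ ω, g ω ∂P = 2 ^ (∑ t ∈ S, (d t - 1)) *
        ∑ T ∈ S.powerset, m (∑ t ∈ T, t * d t) * ∏ s ∈ S \ T, (m s) ^ (d s) := by
      simp_rw [hgexp]
      rw [integral_const_mul, integral_finset_sum _ (fun T _ => (hmb.1 _).mul_const _)]
      congr 1
      exact Finset.sum_congr rfl fun T _ => by rw [integral_mul_const]
    have hDsum : ∀ T ∈ S.powerset, (∑ t ∈ T, t * d t) + ∑ s ∈ S \ T, s * d s = D := by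
      intro T hT
      rw [add_comm]
      exact Finset.sum_sdiff (Finset.mem_powerset.mp hT)
    apply Finset.le_inf'
    intro t0 ht0
    have hterm : ∀ T ∈ S.powerset,
        (Nat.factorial t0 : ℝ) * (m (∑ t ∈ T, t * d t) * ∏ s ∈ S \ T, (m s) ^ (d s)) ≤
          L ^ (D - t0) * (Nat.factorial D : ℝ) * m t0 := by
      intro T hT
      have hcond : t0 ≤ ∑ t ∈ T, t * d t ∨ (t0 ∈ S \ T ∧ 1 ≤ d t0) := by
        by_cases h : t0 ∈ T
        · left
          have h1 : t0 ≤ t0 * d t0 :=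
            Nat.le_mul_of_pos_right t0 (hd t0 ht0)
          exact le_trans h1 (Finset.single_le_sum (f := fun s => s * d s)
            (fun s _ => Nat.zero_le _) h)
        · exact Or.inr ⟨Finset.mem_sdiff.mpr ⟨ht0, h⟩, hd t0 ht0⟩
      have h := key_term_bound L hL m hm0 hmnn hstep (∑ t ∈ T, t * d t) (S \ T) d t0 hcond
      rwa [hDsum T hT] at h
    have hsum_le : (Nat.factorial t0 : ℝ) *
        ∑ T ∈ S.powerset, m (∑ t ∈ T, t * d t) * ∏ s ∈ S \ T, (m s) ^ (d s) ≤
          (2:ℝ) ^ S.card * (L ^ (D - t0) * (Nat.factorial D : ℝ) * m t0) := by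
      rw [Finset.mul_sum]
      calc ∑ T ∈ S.powerset, (Nat.factorial t0 : ℝ) *
            (m (∑ t ∈ T, t * d t) * ∏ s ∈ S \ T, (m s) ^ (d s))
          ≤ ∑ T ∈ S.powerset, L ^ (D - t0) * (Nat.factorial D : ℝ) * m t0 :=
            Finset.sum_le_sum hterm
        _ = (2:ℝ) ^ S.card * (L ^ (D - t0) * (Nat.factorial D : ℝ) * m t0) := by
            rw [Finset.sum_const, Finset.card_powerset, nsmul_eq_mul]
            push_cast; ring
    have hcard : (∑ t ∈ S, (d t - 1)) + S.card = ∑ t ∈ S, d t := by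
      rw [Finset.card_eq_sum_ones, ← Finset.sum_add_distrib]
      exact Finset.sum_congr rfl fun t ht => by have := hd t ht; omega
    rw [le_div_iff₀ (by positivity : (0:ℝ) < (Nat.factorial t0 : ℝ))]
    have h1 : |∫ ω, ∏ t ∈ S, (Z ω ^ t - ∫ ω', Z ω' ^ t ∂P) ^ d t ∂P| ≤ ∫ ω, g ω ∂P := by
      calc |∫ ω, ∏ t ∈ S, (Z ω ^ t - ∫ ω', Z ω' ^ t ∂P) ^ d t ∂P|
          ≤ ∫ ω, ∏ t ∈ S, |Z ω ^ t - ∫ ω', Z ω' ^ t ∂P| ^ d t ∂P := by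
            have := norm_integral_le_integral_norm (μ := P)
              (fun ω => ∏ t ∈ S, (Z ω ^ t - ∫ ω', Z ω' ^ t ∂P) ^ d t)
            simpa [Real.norm_eq_abs] using this
        _ ≤ ∫ ω, g ω ∂P :=
            integral_mono_of_nonneg (Filter.Eventually.of_forall fun ω =>
                Finset.prod_nonneg fun t _ => pow_nonneg (abs_nonneg _) _)
              hgint (Filter.Eventually.of_forall hpt)
    calc |∫ ω, ∏ t ∈ S, (Z ω ^ t - ∫ ω', Z ω' ^ t ∂P) ^ d t ∂P| * (Nat.factorial t0 : ℝ)
        ≤ (∫ ω, g ω ∂P) * (Nat.factorial t0 : ℝ) :=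
          mul_le_mul_of_nonneg_right h1 (by positivity)
      _ = 2 ^ (∑ t ∈ S, (d t - 1)) * ((Nat.factorial t0 : ℝ) *
            ∑ T ∈ S.powerset, m (∑ t ∈ T, t * d t) * ∏ s ∈ S \ T, (m s) ^ (d s)) := by
          rw [hgval]; ring
      _ ≤ 2 ^ (∑ t ∈ S, (d t - 1)) *
            ((2:ℝ) ^ S.card * (L ^ (D - t0) * (Nat.factorial D : ℝ) * m t0)) := by
          apply mul_le_mul_of_nonneg_left hsum_le (by positivity)
      _ = 2 ^ ((∑ t ∈ S, (d t - 1)) + S.card) * L ^ (D - t0) * (Nat.factorial D : ℝ) * m t0 := by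
          rw [pow_add]; ring
      _ = 2 ^ (∑ s ∈ S, d s) * L ^ (D - t0) * (Nat.factorial D : ℝ) * m t0 := by
          rw [hcard]
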